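/- Let K₀ be a field and F₀ the field of rational functions over K₀ in the variables x_1,…,x_n. Fix k ∈ {1,…,n} and nonnegative integers a_1,…,a_n with a_k = 0. Let τ, τ' : F₀ → F₀ be K₀-algebra homomorphisms with τ(x_i) = x_i and τ'(x_i) = x_i for all i ≠ k, and τ(x_k) = τ'(x_k) = x_k^{-1}·∏_{j≠k} x_j^{a_j}. Then τ ∘ τ' = id_{F₀} (in particular this monomial substitution is an involutive automorphism of F₀). In the generalized cluster algebra setting, taking a_j = [−ε_{k;t}·b_{jk;t}·r_k]_+ this gives τ_{k;t} ∘ τ_{k;t'} = 1. -/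

import Mathlib

/-- Let `F₀` be the field of rational functions over a field `K₀` in
`x_1, …, x_n`. Fix `k` and nonnegative integers `a_1, …, a_n` with `a_k = 0`. If
`τ, τ' : F₀ → F₀` are `K₀`-algebra homomorphisms fixing `x_i` for `i ≠ k` and sending
`x_k` to `x_k⁻¹·∏_{j ≠ k} x_j^{a_j}`, then `τ ∘ τ' = id`. -/
theorem stmt_5 (n : ℕ) (K₀ : Type*) [Field K₀] (k : Fin n)
    (a : Fin n → ℕ) (hak : a k = 0)
    (τ τ' : FractionRing (MvPolynomial (Fin n) K₀) →+*
      FractionRing (MvPolynomial (Fin n) K₀))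
    (hτc : ∀ c : K₀,
      τ (algebraMap (MvPolynomial (Fin n) K₀) _ (MvPolynomial.C c)) =
        algebraMap (MvPolynomial (Fin n) K₀) _ (MvPolynomial.C c))
    (hτ'c : ∀ c : K₀,
      τ' (algebraMap (MvPolynomial (Fin n) K₀) _ (MvPolynomial.C c)) =
        algebraMap (MvPolynomial (Fin n) K₀) _ (MvPolynomial.C c))
    (hτx : ∀ i, i ≠ k →
      τ (algebraMap (MvPolynomial (Fin n) K₀) _ (MvPolynomial.X i)) =
        algebraMap (MvPolynomial (Fin n) K₀) _ (MvPolynomial.X i))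
    (hτ'x : ∀ i, i ≠ k →
      τ' (algebraMap (MvPolynomial (Fin n) K₀) _ (MvPolynomial.X i)) =
        algebraMap (MvPolynomial (Fin n) K₀) _ (MvPolynomial.X i))
    (hτk :
      τ (algebraMap (MvPolynomial (Fin n) K₀) _ (MvPolynomial.X k)) =
        (algebraMap (MvPolynomial (Fin n) K₀) _ (MvPolynomial.X k))⁻¹ *
          ∏ j ∈ Finset.univ.erase k,
            (algebraMap (MvPolynomial (Fin n) K₀) _ (MvPolynomial.X j)) ^ (a j))
    (hτ'k :
      τ' (algebraMap (MvPolynomial (Fin n) K₀) _ (MvPolynomial.X k)) =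
        (algebraMap (MvPolynomial (Fin n) K₀) _ (MvPolynomial.X k))⁻¹ *
          ∏ j ∈ Finset.univ.erase k,
            (algebraMap (MvPolynomial (Fin n) K₀) _ (MvPolynomial.X j)) ^ (a j)) :
    ∀ f, τ (τ' f) = f := by
  set R := MvPolynomial (Fin n) K₀
  set F := FractionRing R
  set φ := algebraMap R F with hφ
  have hxne : ∀ i : Fin n, φ (MvPolynomial.X i) ≠ 0 := by
    intro i
    simpa using (map_ne_zero_iff φ (IsFractionRing.injective R F)).mpr
      (MvPolynomial.X_ne_zero i)
  have hPne : (∏ j ∈ Finset.univ.erase k, φ (MvPolynomial.X j) ^ (a j)) ≠ 0 :=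
    Finset.prod_ne_zero_iff.mpr fun j _ => pow_ne_zero _ (hxne j)
  have hτP : τ (∏ j ∈ Finset.univ.erase k, φ (MvPolynomial.X j) ^ (a j)) =
      ∏ j ∈ Finset.univ.erase k, φ (MvPolynomial.X j) ^ (a j) := by
    rw [map_prod]
    refine Finset.prod_congr rfl fun j hj => ?_
    rw [map_pow, hτx j (Finset.ne_of_mem_erase hj)]
  have key : ∀ f, (τ.comp τ') f = f := by
    have h : τ.comp τ' = RingHom.id F := by
      apply IsLocalization.ringHom_ext (nonZeroDivisors R)
      apply MvPolynomial.ringHom_ext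
      · intro c
        show τ (τ' (φ (MvPolynomial.C c))) = φ (MvPolynomial.C c)
        simp only [RingHom.comp_apply, RingHom.id_apply, hτ'c, hτc]
      · intro i
        by_cases hik : i = k
        · subst hik
          show τ (τ' (φ (MvPolynomial.X i))) = φ (MvPolynomial.X i)
          simp only [RingHom.comp_apply, RingHom.id_apply, hτ'k]
          rw [map_mul, map_inv₀, hτk, hτP, mul_inv, inv_inv, mul_assoc,
            inv_mul_cancel₀ hPne, mul_one]
        · show τ (τ' (φ (MvPolynomial.X i))) = φ (MvPolynomial.X i)
          simp only [RingHom.comp_apply, RingHom.id_apply, hτ'x i hik, hτx i hik]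
    intro f
    exact congrFun (congrArg (fun g => g.toFun) h) f
  intro f
  exact key f
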